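/- For every k ∈ ℕ: (1/γ_{i_k} − L_{i_k}/2 − τ L_res) · ‖x^{k+1} − x^k‖² ≤ F(x^k) + α̃_k − (F(x^{k+1}) + α̃_{k+1}), where α̃_k = (L_res/2) · Σ_{h=k−τ}^{k−1} (h − (k−τ) + 1) · ‖x^{h+1} − x^h‖². -/

import Mathlib

open MeasureTheory ProbabilityTheory Filter Topology Set
open scoped BigOperators RealInnerProductSpace ENNReal

noncomputable section

set_option synthInstance.maxHeartbeats 400000
set_option maxHeartbeats 1000000

variable {m : ℕ} {H : Fin m → Type*}
  [∀ i, NormedAddCommGroup (H i)] [∀ i, InnerProductSpace ℝ (H i)]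

/-- The Hilbert direct sum `H = H₁ ⊕ ⋯ ⊕ H_m` is complete when each factor is. -/
instance [∀ i, CompleteSpace (H i)] : CompleteSpace (PiLp 2 H) :=
  inferInstance

/-- Weighted squared norm `∑ i, w i * ‖u i‖²` on the direct sum. -/
def wnormSq (w : Fin m → ℝ) (u : PiLp 2 H) : ℝ := ∑ i, w i * ‖u i‖ ^ 2

/-- Weighted inner product `∑ i, w i * ⟪u i, v i⟫` on the direct sum. -/
def winner (w : Fin m → ℝ) (u v : PiLp 2 H) : ℝ := ∑ i, w i * ⟪u i, v i⟫

/-- `upd x i u` replaces the `i`-th coordinate of `x` by `u`. -/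
def upd (x : PiLp 2 H) (i : Fin m) (u : H i) : PiLp 2 H := WithLp.toLp 2 (Function.update x i u)

/-- `IsProx c gi v pt` asserts that `pt` is the unique minimizer of
`u ↦ gi u + (1/(2c))‖u − v‖²`, i.e. `pt = prox_{c·gi}(v)`. -/
def IsProx {E : Type*} [NormedAddCommGroup E] (c : ℝ) (gi : E → ℝ) (v pt : E) : Prop :=
  (∀ u : E, gi pt + 1 / (2 * c) * ‖pt - v‖ ^ 2 ≤ gi u + 1 / (2 * c) * ‖u - v‖ ^ 2) ∧
  (∀ u : E, gi u + 1 / (2 * c) * ‖u - v‖ ^ 2 ≤ gi pt + 1 / (2 * c) * ‖pt - v‖ ^ 2 → u = pt)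

/-- The objective `F = f + g`, where `g x = ∑ i, g i (x i)`. -/
def Fobj (f : PiLp 2 H → ℝ) (g : ∀ i, H i → ℝ) (z : PiLp 2 H) : ℝ := f z + ∑ i, g i (z i)

/-- Delayed iterate `x̂^k`, coordinate `j` reads `x^{k - d^k_j}` (deterministic trajectory,
indices in `ℤ`, with `x^n = x^0` for `n ≤ 0`). -/
def xhatD (x : ℤ → PiLp 2 H) (d : ℕ → Fin m → ℕ) (k : ℕ) : PiLp 2 H :=
  WithLp.toLp 2 (fun j => x ((k : ℤ) - d k j) j)

/-- Delayed iterate `x̂^k` (random trajectory). -/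
def xhatP {Ω : Type*} (x : ℤ → Ω → PiLp 2 H) (d : ℕ → Fin m → ℕ) (k : ℕ) (ω : Ω) :
    PiLp 2 H :=
  WithLp.toLp 2 (fun j => x ((k : ℤ) - d k j) ω j)

/-- `alphaT c τ x k = c * ∑_{h=k-τ}^{k-1} (h-(k-τ)+1) ‖x^{h+1} - x^h‖²`. -/
def alphaT (c : ℝ) (τ : ℕ) (x : ℤ → PiLp 2 H) (k : ℕ) : ℝ :=
  c * ∑ j ∈ Finset.range τ,
    ((j : ℝ) + 1) * ‖x ((k : ℤ) - τ + j + 1) - x ((k : ℤ) - τ + j)‖ ^ 2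

/-- `alphaV p c τ x k ω = c * ∑_{h=k-τ}^{k-1} (h-(k-τ)+1) ‖x^{h+1} - x^h‖²_V`. -/
def alphaV {Ω : Type*} (p : Fin m → ℝ) (c : ℝ) (τ : ℕ) (x : ℤ → Ω → PiLp 2 H)
    (k : ℕ) (ω : Ω) : ℝ :=
  c * ∑ j ∈ Finset.range τ,
    ((j : ℝ) + 1) * wnormSq p (x ((k : ℤ) - τ + j + 1) ω - x ((k : ℤ) - τ + j) ω)

/-- The constant `L_res^V/(2√p_max)` appearing in `α_k`, where `L_res^V = L_res √(p_max/p_min)`. -/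
def alphaConst (Lres pmax pmin : ℝ) : ℝ :=
  Lres * Real.sqrt (pmax / pmin) / (2 * Real.sqrt pmax)

/-- The σ-algebra generated by `i_0, …, i_{k-1}`. -/
def pastFiltration {Ω : Type*} [MeasurableSpace Ω] (idx : ℕ → Ω → Fin m) (k : ℕ) :
    MeasurableSpace Ω :=
  ⨆ j ∈ Finset.range k, MeasurableSpace.comap (idx j) ⊤

/-- The random index set `J(k) = {h ∈ {k-τ,…,k-1} : d^k_{i_h} ≥ k-h}`. -/
def Jset {Ω : Type*} (idx : ℕ → Ω → Fin m) (d : ℕ → Fin m → ℕ) (τ k : ℕ) (ω : Ω) :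
    Finset ℕ :=
  (Finset.Ico (k - τ) k).filter fun h => k - h ≤ d k (idx h ω)


lemma combo_sq' {E : Type*} [NormedAddCommGroup E] [InnerProductSpace ℝ E] (p q : E) (t : ℝ) :
    ‖p + t•(q - p)‖^2 = (1-t)*‖p‖^2 + t*‖q‖^2 - t*(1-t)*‖q-p‖^2 := by
  have hq : ‖q‖^2 = ‖p‖^2 + 2*⟪p, q-p⟫ + ‖q-p‖^2 := by
    conv_lhs => rw [show q = p + (q - p) from by abel]
    rw [norm_add_sq_real]
  rw [norm_add_sq_real, real_inner_smul_right, norm_smul, Real.norm_eq_abs, mul_pow, sq_abs, hq]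
  ring

lemma prox_strong {E : Type*} [NormedAddCommGroup E] [InnerProductSpace ℝ E]
    {c : ℝ} (hc : 0 < c) {gi : E → ℝ} (hg : ConvexOn ℝ Set.univ gi) {v pt : E}
    (hp : ∀ u, gi pt + 1/(2*c)*‖pt - v‖^2 ≤ gi u + 1/(2*c)*‖u - v‖^2) (u : E) :
    gi pt + 1/(2*c)*‖pt-v‖^2 + 1/(2*c)*‖u-pt‖^2 ≤ gi u + 1/(2*c)*‖u-v‖^2 := by
  have key : ∀ t ∈ Ioc (0:ℝ) 1,
      gi pt + 1/(2*c)*‖pt-v‖^2 + 1/(2*c)*(1-t)*‖u-pt‖^2 ≤ gi u + 1/(2*c)*‖u-v‖^2 := by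
    intro t ht
    obtain ⟨ht0, ht1⟩ := ht
    have hw : (1-t)•pt + t•u = pt + t•(u - pt) := by
      module
    have hcvx := hg.2 (Set.mem_univ pt) (Set.mem_univ u)
      (by linarith : (0:ℝ) ≤ 1 - t) ht0.le (by ring)
    rw [hw] at hcvx
    simp only [smul_eq_mul] at hcvx
    have hmin := hp (pt + t•(u - pt))
    have hq := combo_sq' (pt - v) (u - v) t
    have hw1 : (u - v) - (pt - v) = u - pt := by abel
    have hw2 : (pt - v) + t•(u - pt) = (pt + t•(u - pt)) - v := by abel
    rw [hw1, hw2] at hq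
    have h2c : 0 < 1/(2*c) := by positivity
    have step : t * (gi pt + 1/(2*c)*‖pt-v‖^2 + 1/(2*c)*(1-t)*‖u-pt‖^2)
        ≤ t * (gi u + 1/(2*c)*‖u-v‖^2) := by nlinarith [hq, hmin, hcvx]
    exact le_of_mul_le_mul_left step ht0
  have tend : Filter.Tendsto
      (fun t : ℝ => gi pt + 1/(2*c)*‖pt-v‖^2 + 1/(2*c)*(1-t)*‖u-pt‖^2)
      (nhdsWithin 0 (Ioi 0)) (nhds (gi pt + 1/(2*c)*‖pt-v‖^2 + 1/(2*c)*(1-(0:ℝ))*‖u-pt‖^2)) := by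
    apply Filter.Tendsto.mono_left _ nhdsWithin_le_nhds
    exact (Continuous.tendsto (by continuity) 0)
  have hle := le_of_tendsto tend
    (Filter.eventually_of_mem (Ioc_mem_nhdsGT one_pos) key)
  simpa using hle

lemma descent_aux {E : Type*} [NormedAddCommGroup E] [InnerProductSpace ℝ E] [CompleteSpace E]
    (f : E → ℝ) (f' : E → E) (hf : ∀ z, HasGradientAt f (f' z) z) (x e : E) (C : ℝ)
    (hb : ∀ t ∈ Icc (0:ℝ) 1, ⟪f' (x + t • e), e⟫ ≤ ⟪f' x, e⟫ + C * t) :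
    f (x + e) ≤ f x + ⟪f' x, e⟫ + C / 2 := by
  set φ : ℝ → ℝ := fun t => f (x + t • e) - t * ⟪f' x, e⟫ - C * t^2 / 2 with hφ
  have hderiv : ∀ t : ℝ, HasDerivAt φ (⟪f' (x + t•e), e⟫ - ⟪f' x, e⟫ - C * t) t := by
    intro t
    have hc : HasDerivAt (fun t : ℝ => x + t • e) e t := by
      simpa using ((hasDerivAt_id t).smul_const e).const_add x
    have h1 : HasDerivAt (fun t : ℝ => f (x + t • e)) (⟪f' (x + t•e), e⟫) t := by
      have := ((hf (x + t•e)).hasFDerivAt).comp_hasDerivAt t hc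
      simp only [InnerProductSpace.toDual_apply_apply] at this
      exact this
    have h2 : HasDerivAt (fun t : ℝ => t * ⟪f' x, e⟫) (⟪f' x, e⟫) t := by
      simpa using (hasDerivAt_id t).mul_const (⟪f' x, e⟫)
    have h3 : HasDerivAt (fun t : ℝ => C * t^2 / 2) (C * t) t := by
      have h := ((hasDerivAt_pow 2 t).const_mul C).div_const 2
      refine h.congr_deriv ?_
      ring
    exact (h1.sub h2).sub h3
  have hdiff : Differentiable ℝ φ := fun t => (hderiv t).differentiableAt
  have hant : AntitoneOn φ (Icc 0 1) := by
    apply antitoneOn_of_deriv_nonpos (convex_Icc 0 1) hdiff.continuous.continuousOn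
      hdiff.differentiableOn
    intro t ht
    rw [interior_Icc] at ht
    rw [(hderiv t).deriv]
    have := hb t ⟨ht.1.le, ht.2.le⟩
    linarith
  have h10 : φ 1 ≤ φ 0 :=
    hant (left_mem_Icc.2 zero_le_one) (right_mem_Icc.2 zero_le_one) zero_le_one
  simp only [hφ, one_smul, zero_smul, add_zero, one_pow, mul_one, zero_pow, mul_zero,
    zero_mul, zero_div, sub_zero, one_mul] at h10
  linarith

lemma coord_norm_le (v : PiLp 2 H) (j : Fin m) : ‖v j‖ ≤ ‖v‖ := by
  have h := PiLp.norm_sq_eq_of_L2 H v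
  have h1 : ‖v j‖^2 ≤ ‖v‖^2 := by
    rw [h]
    exact Finset.single_le_sum (f := fun i => ‖v i‖^2) (fun i _ => sq_nonneg _)
      (Finset.mem_univ j)
  nlinarith [norm_nonneg v, norm_nonneg (v j)]

lemma norm_sq_single_support (v : PiLp 2 H) (i : Fin m)
    (hv : ∀ j, j ≠ i → v j = 0) : ‖v‖^2 = ‖v i‖^2 := by
  rw [PiLp.norm_sq_eq_of_L2]
  exact Finset.sum_eq_single i (fun b _ hb => by rw [hv b hb]; simp)
    (fun h => absurd (Finset.mem_univ i) h)

/-- Proposition: deterministic descent inequality. -/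
theorem stmt16
    [∀ i, CompleteSpace (H i)]
    (hm : 0 < m)
    (τ : ℕ) (d : ℕ → Fin m → ℕ) (hd : ∀ (k : ℕ) (j : Fin m), d k j ≤ min k τ)
    (idx : ℕ → Fin m)
    (x : ℤ → PiLp 2 H) (x0 : PiLp 2 H)
    (hx_init : ∀ n : ℤ, n ≤ 0 → x n = x0)
    (hx_agree : ∀ (k : ℕ) (j : Fin m), j ≠ idx k → x ((k : ℤ) + 1) j = x (k : ℤ) j)
    (f : PiLp 2 H → ℝ) (f' : PiLp 2 H → PiLp 2 H)
    (hf_grad : ∀ z : PiLp 2 H, HasGradientAt f (f' z) z)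
    (Lres : ℝ) (hLres_pos : 0 < Lres)
    (hf_lip_res : ∀ (z : PiLp 2 H) (i : Fin m) (u u' : H i),
      ‖f' (upd z i u) - f' (upd z i u')‖ ≤ Lres * ‖u - u'‖)
    (L : Fin m → ℝ)
    (hf_lip_blk : ∀ (z : PiLp 2 H) (i : Fin m) (u u' : H i),
      ‖f' (upd z i u) i - f' (upd z i u') i‖ ≤ L i * ‖u - u'‖)
    (g : ∀ i, H i → ℝ) (hg_convex : ∀ i, ConvexOn ℝ Set.univ (g i))
    (hg_lsc : ∀ i, LowerSemicontinuous (g i))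
    (γ : Fin m → ℝ) (hγ_pos : ∀ i, 0 < γ i)
    (hx_prox : ∀ k : ℕ,
      IsProx (γ (idx k)) (g (idx k))
        (x (k : ℤ) (idx k) - γ (idx k) • f' (xhatD x d k) (idx k))
        (x ((k : ℤ) + 1) (idx k)))
 :
    ∀ k : ℕ,
      (1 / γ (idx k) - L (idx k) / 2 - τ * Lres) * ‖x ((k : ℤ) + 1) - x (k : ℤ)‖ ^ 2 ≤
        Fobj f g (x (k : ℤ)) + alphaT (Lres / 2) τ x k
          - (Fobj f g (x ((k : ℤ) + 1)) + alphaT (Lres / 2) τ x (k + 1)) := by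
  intro k
  set i : Fin m := idx k with hi
  have hc : 0 < γ i := hγ_pos i
  set xh : PiLp 2 H := xhatD x d k with hxh
  set Δ : PiLp 2 H := x ((k:ℤ)+1) - x (k:ℤ) with hΔ
  have hΔj : ∀ j, j ≠ i → Δ j = 0 := by
    intro j hj
    rw [hΔ]
    simp only [PiLp.sub_apply]
    rw [hx_agree k j hj, sub_self]
  have hNsq : ‖Δ‖^2 = ‖Δ i‖^2 := norm_sq_single_support Δ i hΔj
  set D : ℕ → ℝ := fun j => ‖x ((k:ℤ) - τ + j + 1) - x ((k:ℤ) - τ + j)‖ with hD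
  have hDτ : D τ = ‖Δ‖ := by
    rw [hD]
    simp only
    rw [show (k:ℤ) - τ + τ = (k:ℤ) from by ring, hΔ]
  set S : ℝ := ∑ j ∈ Finset.range τ, D j ^ 2 with hS
  -- α telescoping
  have halpha : alphaT (Lres/2) τ x k - alphaT (Lres/2) τ x (k+1)
      = (Lres/2) * S - (Lres/2) * (τ:ℝ) * ‖Δ‖^2 := by
    have h1 : alphaT (Lres/2) τ x k
        = (Lres/2) * ∑ j ∈ Finset.range τ, ((j:ℝ)+1) * D j ^2 := rfl
    have h2 : alphaT (Lres/2) τ x (k+1)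
        = (Lres/2) * ∑ j ∈ Finset.range τ, ((j:ℝ)+1) * D (j+1) ^2 := by
      unfold alphaT
      congr 1
      apply Finset.sum_congr rfl
      intro j _
      have e1 : ((k+1:ℕ):ℤ) - τ + j + 1 = (k:ℤ) - τ + ((j+1:ℕ):ℤ) + 1 := by push_cast; ring
      have e2 : ((k+1:ℕ):ℤ) - τ + j = (k:ℤ) - τ + ((j+1:ℕ):ℤ) := by push_cast; ring
      rw [e1, e2]
    have h3 : ∑ j ∈ Finset.range τ, ((j:ℝ)+1) * D (j+1) ^2
        = (∑ j ∈ Finset.range τ, (j:ℝ) * D j ^2) + (τ:ℝ) * D τ ^2 := by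
      have ha := Finset.sum_range_succ' (fun j : ℕ => (j:ℝ) * D j ^2) τ
      rw [Finset.sum_range_succ (fun j : ℕ => (j:ℝ) * D j ^2) τ] at ha
      have e : ∀ j ∈ Finset.range τ, ((j:ℝ)+1) * D (j+1)^2 = ((j+1:ℕ):ℝ) * D (j+1) ^2 := by
        intro j _; push_cast; ring
      rw [Finset.sum_congr rfl e]
      push_cast at ha ⊢
      linarith [ha]
    have h4 : (∑ j ∈ Finset.range τ, ((j:ℝ)+1) * D j ^2)
        - ∑ j ∈ Finset.range τ, (j:ℝ) * D j ^2 = S := by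
      rw [hS, ← Finset.sum_sub_distrib]
      apply Finset.sum_congr rfl
      intro j _; ring
    rw [h1, h2, h3, hDτ]
    linear_combination (Lres/2) * h4
  -- g-sum collapse
  have hgsum : (∑ j, g j (x ((k:ℤ)+1) j)) - ∑ j, g j (x (k:ℤ) j)
      = g i (x ((k:ℤ)+1) i) - g i (x (k:ℤ) i) := by
    rw [← Finset.sum_sub_distrib]
    exact Finset.sum_eq_single i (fun b _ hb => by rw [hx_agree k b hb]; ring)
      (fun h => absurd (Finset.mem_univ i) h)
  -- prox inequality with strong convexity
  set gradh : H i := f' xh i with hgradh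
  have hprox0 := (hx_prox k).1
  have hps := prox_strong hc (hg_convex i) hprox0 (x (k:ℤ) i)
  set v : H i := x (k:ℤ) i - γ i • gradh with hv
  have e1 : ‖x (k:ℤ) i - v‖^2 = (γ i)^2 * ‖gradh‖^2 := by
    rw [hv, sub_sub_cancel, norm_smul, Real.norm_eq_abs, abs_of_pos hc, mul_pow]
  have e2 : x ((k:ℤ)+1) i - v = Δ i + γ i • gradh := by
    rw [hv, hΔ]
    simp only [PiLp.sub_apply]
    abel
  have e3 : ‖x ((k:ℤ)+1) i - v‖^2
      = ‖Δ i‖^2 + 2*(γ i)*⟪Δ i, gradh⟫ + (γ i)^2*‖gradh‖^2 := by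
    rw [e2, norm_add_sq_real, real_inner_smul_right, norm_smul, Real.norm_eq_abs,
      abs_of_pos hc, mul_pow]
    ring
  have e4 : ‖x (k:ℤ) i - x ((k:ℤ)+1) i‖^2 = ‖Δ i‖^2 := by
    rw [norm_sub_rev]
    have hcc : x ((k:ℤ)+1) i - x (k:ℤ) i = Δ i := by
      rw [hΔ]; simp only [PiLp.sub_apply]
    rw [hcc]
  rw [e1, e3, e4] at hps
  have hg1 : g i (x ((k:ℤ)+1) i) + (1/(γ i))*‖Δ i‖^2 + ⟪Δ i, gradh⟫ ≤ g i (x (k:ℤ) i) := by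
    have hcne : γ i ≠ 0 := ne_of_gt hc
    have hid : 1/(2*γ i) * (‖Δ i‖^2 + 2*(γ i)*⟪Δ i, gradh⟫ + (γ i)^2*‖gradh‖^2)
        + 1/(2*γ i) * ‖Δ i‖^2 - 1/(2*γ i) * ((γ i)^2*‖gradh‖^2)
        = (1/(γ i))*‖Δ i‖^2 + ⟪Δ i, gradh⟫ := by
      field_simp
      ring
    linarith [hps, hid]
  -- descent lemma along coordinate i
  have hinner : ∀ z : PiLp 2 H, ⟪f' z, Δ⟫ = ⟪f' z i, Δ i⟫ := by
    intro z
    rw [PiLp.inner_apply]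
    exact Finset.sum_eq_single i (fun b _ hb => by rw [hΔj b hb]; simp)
      (fun h => absurd (Finset.mem_univ i) h)
  have hf1 : f (x ((k:ℤ)+1)) ≤ f (x (k:ℤ)) + ⟪f' (x (k:ℤ)) i, Δ i⟫ + (L i * ‖Δ i‖^2)/2 := by
    have hb : ∀ t ∈ Icc (0:ℝ) 1,
        ⟪f' (x (k:ℤ) + t • Δ), Δ⟫ ≤ ⟪f' (x (k:ℤ)), Δ⟫ + (L i * ‖Δ i‖^2) * t := by
      intro t ht
      rw [hinner, hinner]
      have hupd1 : x (k:ℤ) + t•Δ = upd (x (k:ℤ)) i (x (k:ℤ) i + t•(Δ i)) := by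
        ext j
        by_cases hj : j = i
        · subst hj
          simp [upd, PiLp.add_apply, PiLp.smul_apply]
        · simp [upd, Function.update_of_ne hj, PiLp.add_apply, PiLp.smul_apply, hΔj j hj]
      have hupd2 : x (k:ℤ) = upd (x (k:ℤ)) i (x (k:ℤ) i) := by
        simp [upd]
      have hblk := hf_lip_blk (x (k:ℤ)) i (x (k:ℤ) i + t•(Δ i)) (x (k:ℤ) i)
      rw [← hupd1, ← hupd2] at hblk
      have hsimp : (x (k:ℤ) i + t•(Δ i)) - x (k:ℤ) i = t • Δ i := by abel
      rw [hsimp, norm_smul, Real.norm_eq_abs, abs_of_nonneg ht.1] at hblk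
      have hip : ⟪f' (x (k:ℤ) + t•Δ) i - f' (x (k:ℤ)) i, Δ i⟫
          ≤ ‖f' (x (k:ℤ) + t•Δ) i - f' (x (k:ℤ)) i‖ * ‖Δ i‖ := real_inner_le_norm _ _
      have hin : ⟪f' (x (k:ℤ) + t•Δ) i - f' (x (k:ℤ)) i, Δ i⟫
          = ⟪f' (x (k:ℤ) + t•Δ) i, Δ i⟫ - ⟪f' (x (k:ℤ)) i, Δ i⟫ := inner_sub_left _ _ _
      have hnorms : ‖f' (x (k:ℤ) + t•Δ) i - f' (x (k:ℤ)) i‖ * ‖Δ i‖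
          ≤ (L i * (t * ‖Δ i‖)) * ‖Δ i‖ := mul_le_mul_of_nonneg_right hblk (norm_nonneg _)
      have hring : (L i * (t * ‖Δ i‖)) * ‖Δ i‖ = (L i * ‖Δ i‖^2) * t := by ring
      rw [hring] at hnorms
      linarith [hip, hnorms, hin.symm.le]
    have hd1 := descent_aux f f' hf_grad (x (k:ℤ)) Δ (L i * ‖Δ i‖^2) hb
    rw [hinner] at hd1
    rwa [show x (k:ℤ) + Δ = x ((k:ℤ)+1) from by rw [hΔ]; abel] at hd1
  -- Lipschitz chain bound on the full gradient difference
  have hcoord : ∀ j : Fin m, ‖x (k:ℤ) j - x ((k:ℤ) - d k j) j‖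
      ≤ ∑ j' ∈ Finset.range τ, ‖x ((k:ℤ) - τ + j' + 1) j - x ((k:ℤ) - τ + j') j‖ := by
    intro j
    have hnk : d k j ≤ k := (hd k j).trans (min_le_left _ _)
    have hnτ : d k j ≤ τ := (hd k j).trans (min_le_right _ _)
    set n := d k j with hn
    have htel : x (k:ℤ) j - x ((k:ℤ) - n) j
        = ∑ s ∈ Finset.range n, (x ((k:ℤ) - n + s + 1) j - x ((k:ℤ) - n + s) j) := by
      have h := Finset.sum_range_sub (fun s : ℕ => x ((k:ℤ) - n + s) j) n
      calc x (k:ℤ) j - x ((k:ℤ) - n) j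
          = x ((k:ℤ) - n + (n:ℕ)) j - x ((k:ℤ) - n + ((0:ℕ):ℤ)) j := by
            rw [show (k:ℤ) - n + (n:ℕ) = (k:ℤ) from by push_cast; ring,
              show (k:ℤ) - n + ((0:ℕ):ℤ) = (k:ℤ) - n from by push_cast; ring]
        _ = ∑ s ∈ Finset.range n, (x ((k:ℤ) - n + ((s+1:ℕ):ℤ)) j - x ((k:ℤ) - n + (s:ℕ)) j) :=
            h.symm
        _ = ∑ s ∈ Finset.range n, (x ((k:ℤ) - n + s + 1) j - x ((k:ℤ) - n + s) j) := by
            apply Finset.sum_congr rfl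
            intro s _
            rw [show (k:ℤ) - n + ((s+1:ℕ):ℤ) = (k:ℤ) - n + s + 1 from by push_cast; ring]
    calc ‖x (k:ℤ) j - x ((k:ℤ) - n) j‖
        ≤ ∑ s ∈ Finset.range n, ‖x ((k:ℤ) - n + s + 1) j - x ((k:ℤ) - n + s) j‖ := by
          rw [htel]; exact norm_sum_le _ _
      _ = ∑ s ∈ Finset.range n,
            ‖x ((k:ℤ) - τ + ((τ - n + s:ℕ):ℤ) + 1) j - x ((k:ℤ) - τ + ((τ - n + s:ℕ):ℤ)) j‖ := by
          apply Finset.sum_congr rfl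
          intro s _
          rw [show (k:ℤ) - τ + ((τ - n + s:ℕ):ℤ) + 1 = (k:ℤ) - n + s + 1 from by omega,
            show (k:ℤ) - τ + ((τ - n + s:ℕ):ℤ) = (k:ℤ) - n + s from by omega]
      _ = ∑ j' ∈ (Finset.range n).image (fun s => τ - n + s),
            ‖x ((k:ℤ) - τ + j' + 1) j - x ((k:ℤ) - τ + j') j‖ :=
          (Finset.sum_image (s := Finset.range n) (g := fun s => τ - n + s)
            (f := fun j' : ℕ => ‖x ((k:ℤ) - τ + j' + 1) j - x ((k:ℤ) - τ + j') j‖)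
            (by intro a _ b _ hab; simp only at hab; omega)).symm
      _ ≤ ∑ j' ∈ Finset.range τ, ‖x ((k:ℤ) - τ + j' + 1) j - x ((k:ℤ) - τ + j') j‖ := by
          apply Finset.sum_le_sum_of_subset_of_nonneg
          · intro a ha
            simp only [Finset.mem_image, Finset.mem_range] at ha ⊢
            obtain ⟨s, hs, rfl⟩ := ha
            omega
          · intro _ _ _
            exact norm_nonneg _
  set y : ℕ → PiLp 2 H :=
    fun t => WithLp.toLp 2 (fun j : Fin m => if (j:ℕ) < t then x (k:ℤ) j else x ((k:ℤ) - d k j) j) with hy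
  have hy0 : y 0 = xh := by
    ext j
    simp [hy, hxh, xhatD]
  have hym : y m = x (k:ℤ) := by
    ext j
    simp [hy, j.isLt]
  set jj : ℕ → Fin m := fun t => ⟨t % m, Nat.mod_lt _ hm⟩ with hjjdef
  have hstep : ∀ t ∈ Finset.range m, ‖f' (y (t+1)) - f' (y t)‖
      ≤ Lres * ‖x (k:ℤ) (jj t) - x ((k:ℤ) - d k (jj t)) (jj t)‖ := by
    intro t ht
    rw [Finset.mem_range] at ht
    have hjt : ((jj t : Fin m) : ℕ) = t := Nat.mod_eq_of_lt ht
    have h1 : y (t+1) = upd (y t) (jj t) (x (k:ℤ) (jj t)) := by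
      ext j
      by_cases hje : j = jj t
      · subst hje
        simp [hy, upd, Nat.mod_eq_of_lt ht, hjt]
      · have hjne : (j:ℕ) ≠ t := fun hc => hje (Fin.ext (by rw [hjt]; exact hc))
        simp only [hy, upd, Function.update_of_ne hje]
        by_cases hlt : (j:ℕ) < t
        · simp [hlt, Nat.lt_succ_of_lt hlt]
        · have h2 : ¬ (j:ℕ) < t + 1 := by omega
          simp [hlt, h2]
    have h2 : y t = upd (y t) (jj t) (x ((k:ℤ) - d k (jj t)) (jj t)) := by
      ext j
      by_cases hje : j = jj t
      · subst hje
        simp [hy, upd, Nat.mod_eq_of_lt ht, lt_irrefl, hjt]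
      · simp [upd, Function.update_of_ne hje]
    calc ‖f' (y (t+1)) - f' (y t)‖
        = ‖f' (upd (y t) (jj t) (x (k:ℤ) (jj t)))
            - f' (upd (y t) (jj t) (x ((k:ℤ) - d k (jj t)) (jj t)))‖ := by rw [← h1, ← h2]
      _ ≤ Lres * ‖x (k:ℤ) (jj t) - x ((k:ℤ) - d k (jj t)) (jj t)‖ := hf_lip_res _ _ _ _
  have hchain : ‖f' (x (k:ℤ)) - f' xh‖
      ≤ Lres * ∑ j : Fin m, ‖x (k:ℤ) j - x ((k:ℤ) - d k j) j‖ := by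
    have htel2 : f' (x (k:ℤ)) - f' xh = ∑ t ∈ Finset.range m, (f' (y (t+1)) - f' (y t)) := by
      rw [Finset.sum_range_sub (fun t => f' (y t)) m, hy0, hym]
    have hfin : ∑ t ∈ Finset.range m, ‖x (k:ℤ) (jj t) - x ((k:ℤ) - d k (jj t)) (jj t)‖
        = ∑ j : Fin m, ‖x (k:ℤ) j - x ((k:ℤ) - d k j) j‖ := by
      rw [← Fin.sum_univ_eq_sum_range
        (fun t => ‖x (k:ℤ) (jj t) - x ((k:ℤ) - d k (jj t)) (jj t)‖) m]
      apply Finset.sum_congr rfl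
      intro j _
      rw [show jj (j:ℕ) = j from Fin.ext (Nat.mod_eq_of_lt j.isLt)]
    calc ‖f' (x (k:ℤ)) - f' xh‖
        = ‖∑ t ∈ Finset.range m, (f' (y (t+1)) - f' (y t))‖ := by rw [← htel2]
      _ ≤ ∑ t ∈ Finset.range m, ‖f' (y (t+1)) - f' (y t)‖ := norm_sum_le _ _
      _ ≤ ∑ t ∈ Finset.range m, Lres * ‖x (k:ℤ) (jj t) - x ((k:ℤ) - d k (jj t)) (jj t)‖ :=
          Finset.sum_le_sum hstep
      _ = Lres * ∑ t ∈ Finset.range m, ‖x (k:ℤ) (jj t) - x ((k:ℤ) - d k (jj t)) (jj t)‖ :=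
          (Finset.mul_sum _ _ _).symm
      _ = Lres * ∑ j : Fin m, ‖x (k:ℤ) j - x ((k:ℤ) - d k j) j‖ := by rw [hfin]
  have hsupp : ∀ j' ∈ Finset.range τ,
      (∑ j : Fin m, ‖x ((k:ℤ) - τ + j' + 1) j - x ((k:ℤ) - τ + j') j‖) ≤ D j' := by
    intro j' _
    by_cases hpos : 0 ≤ (k:ℤ) - τ + j'
    · set nn := ((k:ℤ) - τ + j').toNat with hnn
      have hnc : ((nn:ℕ):ℤ) = (k:ℤ) - τ + j' := Int.toNat_of_nonneg hpos
      have hz : ∀ j : Fin m, j ≠ idx nn →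
          x ((k:ℤ) - τ + j' + 1) j - x ((k:ℤ) - τ + j') j = 0 := by
        intro j hj
        rw [← hnc, hx_agree nn j hj, sub_self]
      have hsum : (∑ j : Fin m, ‖x ((k:ℤ) - τ + j' + 1) j - x ((k:ℤ) - τ + j') j‖)
          = ‖x ((k:ℤ) - τ + j' + 1) (idx nn) - x ((k:ℤ) - τ + j') (idx nn)‖ :=
        Finset.sum_eq_single (idx nn) (fun b _ hb => by rw [hz b hb, norm_zero])
          (fun h => absurd (Finset.mem_univ _) h)
      rw [hsum]
      have hco : x ((k:ℤ) - τ + j' + 1) (idx nn) - x ((k:ℤ) - τ + j') (idx nn)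
          = (x ((k:ℤ) - τ + j' + 1) - x ((k:ℤ) - τ + j')) (idx nn) := by
        simp only [PiLp.sub_apply]
      rw [hco]
      simp only [hD]
      exact coord_norm_le _ _
    · push_neg at hpos
      have h1 : x ((k:ℤ) - τ + j' + 1) = x0 := hx_init _ (by omega)
      have h2 : x ((k:ℤ) - τ + j') = x0 := hx_init _ (by omega)
      simp only [hD]
      rw [h1, h2]
      simp [PiLp.sub_apply]
  have hcd : ∀ j' ∈ Finset.range τ, (0:ℝ) ≤ D j' := by
    intro j' _
    simp only [hD]
    exact norm_nonneg _
  have hfull : ‖f' (x (k:ℤ)) - f' xh‖ ≤ Lres * ∑ j' ∈ Finset.range τ, D j' := by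
    refine hchain.trans ?_
    apply mul_le_mul_of_nonneg_left _ hLres_pos.le
    calc ∑ j : Fin m, ‖x (k:ℤ) j - x ((k:ℤ) - d k j) j‖
        ≤ ∑ j : Fin m, ∑ j' ∈ Finset.range τ,
            ‖x ((k:ℤ) - τ + j' + 1) j - x ((k:ℤ) - τ + j') j‖ :=
          Finset.sum_le_sum (fun j _ => hcoord j)
      _ = ∑ j' ∈ Finset.range τ, ∑ j : Fin m,
            ‖x ((k:ℤ) - τ + j' + 1) j - x ((k:ℤ) - τ + j') j‖ := Finset.sum_comm
      _ ≤ ∑ j' ∈ Finset.range τ, D j' := Finset.sum_le_sum hsupp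
  -- cross term bound
  have hΔnorm : ‖Δ i‖ ≤ ‖Δ‖ := coord_norm_le Δ i
  have hcross : ⟪f' (x (k:ℤ)) i, Δ i⟫ - ⟪gradh, Δ i⟫
      ≤ (Lres/2) * S + (τ:ℝ) * (Lres/2) * ‖Δ‖^2 := by
    have h1 : ⟪f' (x (k:ℤ)) i - gradh, Δ i⟫ ≤ ‖f' (x (k:ℤ)) i - gradh‖ * ‖Δ i‖ :=
      real_inner_le_norm _ _
    have h2 : ‖f' (x (k:ℤ)) i - gradh‖ ≤ ‖f' (x (k:ℤ)) - f' xh‖ := by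
      have hcc : f' (x (k:ℤ)) i - gradh = (f' (x (k:ℤ)) - f' xh) i := by
        rw [hgradh]; simp only [PiLp.sub_apply]
      rw [hcc]
      exact coord_norm_le _ _
    have h3 : ‖f' (x (k:ℤ)) i - gradh‖ * ‖Δ i‖ ≤ (Lres * ∑ j' ∈ Finset.range τ, D j') * ‖Δ‖ :=
      mul_le_mul (h2.trans hfull) hΔnorm (norm_nonneg _)
        (mul_nonneg hLres_pos.le (Finset.sum_nonneg hcd))
    have h4 : (Lres * ∑ j' ∈ Finset.range τ, D j') * ‖Δ‖
        = ∑ j' ∈ Finset.range τ, Lres * (D j' * ‖Δ‖) := by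
      rw [Finset.mul_sum, Finset.sum_mul]
      apply Finset.sum_congr rfl
      intro _ _; ring
    have h5 : ∀ j' ∈ Finset.range τ, Lres * (D j' * ‖Δ‖) ≤ (Lres/2) * (D j'^2 + ‖Δ‖^2) := by
      intro j' _
      nlinarith [two_mul_le_add_sq (D j') ‖Δ‖, hLres_pos.le]
    have h6 : ∑ j' ∈ Finset.range τ, (Lres/2) * (D j'^2 + ‖Δ‖^2)
        = (Lres/2)*S + (τ:ℝ)*(Lres/2)*‖Δ‖^2 := by
      rw [← Finset.mul_sum, Finset.sum_add_distrib, Finset.sum_const, Finset.card_range, hS]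
      push_cast
      ring
    have h7 : (Lres * ∑ j' ∈ Finset.range τ, D j') * ‖Δ‖
        ≤ (Lres/2)*S + (τ:ℝ)*(Lres/2)*‖Δ‖^2 := by
      rw [h4, ← h6]
      exact Finset.sum_le_sum h5
    calc ⟪f' (x (k:ℤ)) i, Δ i⟫ - ⟪gradh, Δ i⟫
        = ⟪f' (x (k:ℤ)) i - gradh, Δ i⟫ := (inner_sub_left _ _ _).symm
      _ ≤ _ := h1.trans (h3.trans h7)
  -- final assembly
  have hcomm : ⟪Δ i, gradh⟫ = ⟪gradh, Δ i⟫ := real_inner_comm _ _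
  simp only [Fobj]
  rw [hNsq] at halpha hcross ⊢
  linarith [halpha, hgsum, hg1, hf1, hcross, hcomm]
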